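/- For every positive integer n, the number A(n) = (-3)^{n(n-1)/2} ∏_{i,j=1}^n (3(j-i)+1)/(j-i+n) is a positive integer. -/

import Mathlib

open Finset Nat

-- count lemma
lemma asm_count_ite (n c : ℕ) :
    (∑ k ∈ range n, if c ≤ k then (1:ℕ) else 0) = n - min n c := by
  induction n with
  | zero => simp
  | succ n ih =>
    rw [Finset.sum_range_succ, ih]
    split_ifs with h <;> omega

-- shift lemma
lemma asm_shift (f : ℕ → ℕ) (q a : ℕ) :
    (∑ t ∈ range q, f (a + 1 + t)) + f a = (∑ t ∈ range q, f (a + t)) + f (a + q) := by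
  have h1 := Finset.sum_range_succ (fun t => f (a + t)) q
  have h2 := Finset.sum_range_succ' (fun t => f (a + t)) q
  simp only [add_zero] at h2
  have : (∑ t ∈ range q, f (a + (t + 1))) = ∑ t ∈ range q, f (a + 1 + t) := by
    apply Finset.sum_congr rfl; intro t _; ring_nf
  omega

lemma asm_F0 (q : ℕ) (hq : 1 ≤ q) :
    ∑ t ∈ range q, (3 * t + 1) / q = q := by
  have h : ∀ t ∈ range q, (3 * t + 1) / q =
      (if (q+1)/3 ≤ t then (1:ℕ) else 0) + (if (2*q+1)/3 ≤ t then (1:ℕ) else 0) := by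
    intro t ht
    rw [Finset.mem_range] at ht
    have h1 : (q+1)/3 ≤ t ↔ q ≤ 3 * t + 1 := by omega
    have h2 : (2*q+1)/3 ≤ t ↔ 2*q ≤ 3 * t + 1 := by omega
    split_ifs with ha hb hb
    · exact Nat.div_eq_of_lt_le (by omega) (by omega)
    · exact Nat.div_eq_of_lt_le (by omega) (by omega)
    · omega
    · exact Nat.div_eq_of_lt (by omega)
  rw [Finset.sum_congr rfl h, Finset.sum_add_distrib, asm_count_ite, asm_count_ite]
  omega

lemma asm_F (q : ℕ) (hq : 1 ≤ q) : ∀ a, ∑ t ∈ range q, (3 * (a + t) + 1) / q = 3 * a + q := by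
  intro a
  induction a with
  | zero => simpa using asm_F0 q hq
  | succ a ih =>
    have hs := asm_shift (fun k => (3 * k + 1) / q) q a
    have he : (3 * (a + q) + 1) / q = (3 * a + 1) / q + 3 := by
      have : 3 * (a + q) + 1 = (3 * a + 1) + 3 * q := by ring
      rw [this, Nat.add_mul_div_right _ _ (by omega : 0 < q)]
    have hcongr : (∑ t ∈ range q, (3 * (a + 1 + t) + 1) / q)
        = ∑ t ∈ range q, (3 * ((a + 1) + t) + 1) / q := rfl
    omega

lemma asm_G (q : ℕ) (hq : 1 ≤ q) : ∀ a, ∑ t ∈ range q, (a + t) / q = a := by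
  intro a
  induction a with
  | zero =>
    simp only [zero_add]
    rw [Finset.sum_eq_zero]
    intro t ht; rw [Finset.mem_range] at ht; exact Nat.div_eq_of_lt ht
  | succ a ih =>
    have hs := asm_shift (fun k => k / q) q a
    have he : (a + q) / q = a / q + 1 := Nat.add_div_right a (by omega)
    omega

-- base case n ≤ q
lemma asm_base (q n : ℕ) (hq : 1 ≤ q) (hn : n ≤ q) :
    ∑ k ∈ range n, (n + k) / q ≤ ∑ k ∈ range n, (3 * k + 1) / q := by
  have hL : ∑ k ∈ range n, (n + k) / q = ∑ k ∈ range n, if q - n ≤ k then (1:ℕ) else 0 := by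
    apply Finset.sum_congr rfl
    intro k hk
    rw [Finset.mem_range] at hk
    split_ifs with h
    · exact Nat.div_eq_of_lt_le (by omega) (by omega)
    · exact Nat.div_eq_of_lt (by omega)
  have hR : ∑ k ∈ range n, ((if (q+1)/3 ≤ k then (1:ℕ) else 0) + (if (2*q+1)/3 ≤ k then (1:ℕ) else 0))
      ≤ ∑ k ∈ range n, (3 * k + 1) / q := by
    apply Finset.sum_le_sum
    intro k hk
    have h1 : (q+1)/3 ≤ k ↔ q ≤ 3 * k + 1 := by omega
    have h2 : (2*q+1)/3 ≤ k ↔ 2*q ≤ 3 * k + 1 := by omega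
    split_ifs with ha hb hb
    · have : 2 ≤ (3 * k + 1) / q := (Nat.le_div_iff_mul_le (by omega)).2 (by omega)
      omega
    · have : 1 ≤ (3 * k + 1) / q := (Nat.one_le_div_iff (by omega)).2 (by omega)
      omega
    · omega
    · simp
  rw [hL]
  refine le_trans ?_ hR
  rw [Finset.sum_add_distrib, asm_count_ite, asm_count_ite, asm_count_ite]
  omega

lemma asm_key (q : ℕ) (hq : 1 ≤ q) : ∀ n, ∑ k ∈ range n, (n + k) / q ≤ ∑ k ∈ range n, (3 * k + 1) / q := by
  intro n
  induction n using Nat.strong_induction_on with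
  | _ n ih =>
    by_cases hn : n ≤ q
    · exact asm_base q n hq hn
    · push_neg at hn
      set m := n - q with hm
      have hnm : n = m + q := by omega
      have hmlt : m < n := by omega
      -- S side
      have hS : ∑ k ∈ range n, (3 * k + 1) / q
          = (∑ k ∈ range m, (3 * k + 1) / q) + (3 * m + q) := by
        rw [hnm, Finset.sum_range_add, asm_F q hq m]
      -- T side
      have hT : ∑ k ∈ range n, (n + k) / q
          = (∑ k ∈ range m, (m + k) / q) + (3 * m + q) := by
        rw [hnm, Finset.sum_range_add]
        have h1 : ∑ k ∈ range m, (m + q + k) / q = (∑ k ∈ range m, (m + k) / q) + m := by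
          have hc : ∀ k ∈ range m, (m + q + k) / q = (m + k) / q + 1 := by
            intro k _
            have : m + q + k = (m + k) + q := by ring
            rw [this, Nat.add_div_right _ (by omega)]
          rw [Finset.sum_congr rfl hc, Finset.sum_add_distrib, Finset.sum_const,
            Finset.card_range, smul_eq_mul, mul_one]
        have h2 : ∑ t ∈ range q, (m + q + (m + t)) / q = 2 * m + q := by
          have : ∀ t ∈ range q, (m + q + (m + t)) / q = ((2 * m + q) + t) / q := by
            intro t _; congr 1; ring
          rw [Finset.sum_congr rfl this, asm_G q hq (2 * m + q)]
        rw [h1, h2]; ring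
      rw [hS, hT]
      exact Nat.add_le_add_right (ih m hmlt) _

lemma asm_dvd (n : ℕ) (hn : 1 ≤ n) :
    (∏ k ∈ range n, (n + k)!) ∣ ∏ k ∈ range n, (3 * k + 1)! := by
  have hd : (∏ k ∈ range n, (n + k)!) ≠ 0 :=
    Finset.prod_ne_zero_iff.2 fun k _ => (Nat.factorial_pos _).ne'
  have hnz : (∏ k ∈ range n, (3 * k + 1)!) ≠ 0 :=
    Finset.prod_ne_zero_iff.2 fun k _ => (Nat.factorial_pos _).ne'
  rw [← Nat.factorization_le_iff_dvd hd hnz]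
  rw [Nat.factorization_prod (fun k _ => (Nat.factorial_pos _).ne'),
      Nat.factorization_prod (fun k _ => (Nat.factorial_pos _).ne')]
  rw [Finsupp.le_def]
  intro p
  rw [Finset.sum_apply', Finset.sum_apply']
  by_cases hp : p.Prime
  · haveI := Fact.mk hp
    have hcast : ∀ k ∈ range n, ((n + k)!).factorization p = ∑ i ∈ Ico 1 (3 * n), (n + k) / p ^ i := by
      intro k hk
      rw [Finset.mem_range] at hk
      rw [Nat.factorization_def _ hp]
      exact padicValNat_factorial (by
        calc Nat.log p (n + k) ≤ n + k := Nat.log_le_self _ _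
        _ < 3 * n := by omega)
    have hcast2 : ∀ k ∈ range n, ((3 * k + 1)!).factorization p = ∑ i ∈ Ico 1 (3 * n), (3 * k + 1) / p ^ i := by
      intro k hk
      rw [Finset.mem_range] at hk
      rw [Nat.factorization_def _ hp]
      exact padicValNat_factorial (by
        calc Nat.log p (3 * k + 1) ≤ 3 * k + 1 := Nat.log_le_self _ _
        _ < 3 * n := by omega)
    rw [Finset.sum_congr rfl hcast, Finset.sum_congr rfl hcast2, Finset.sum_comm,
      Finset.sum_comm (s := range n)]
    apply Finset.sum_le_sum
    intro i _
    exact asm_key (p ^ i) (Nat.one_le_iff_ne_zero.2 (pow_ne_zero _ hp.pos.ne')) n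
  · simp [Nat.factorization_eq_zero_of_not_prime _ hp]

-- (3k+1)! = P k * Q k * (3^k * k!)
lemma asm_fact_split (k : ℕ) :
    (3 * k + 1)! = (∏ t ∈ range (k + 1), (3 * t + 1)) * (∏ t ∈ range k, (3 * t + 2)) * (3 ^ k * k !) := by
  induction k with
  | zero => simp
  | succ k ih =>
    have h1 : 3 * (k + 1) + 1 = (3 * k + 1) + 1 + 1 + 1 := by ring
    rw [h1, Nat.factorial_succ, Nat.factorial_succ, Nat.factorial_succ, ih,
      Finset.prod_range_succ (fun t => 3 * t + 1) (k + 1),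
      Finset.prod_range_succ (fun t => 3 * t + 2) k,
      Nat.factorial_succ, pow_succ]
    ring

-- a! * ∏_{j ∈ Icc 1 n} (a + j) = (a + n)!
lemma asm_asc (a : ℕ) : ∀ n : ℕ, a ! * ∏ j ∈ Icc 1 n, (a + j) = (a + n)! := by
  intro n
  induction n with
  | zero => simp
  | succ n ih =>
    rw [← Finset.Ico_add_one_right_eq_Icc] at ih ⊢
    rw [Finset.prod_Ico_succ_top (by omega), ← mul_assoc, ih]
    have : a + (n + 1) = (a + n) + 1 := by ring
    rw [this, Nat.factorial_succ]
    ring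

lemma asm_rowDen (n i : ℕ) (h2 : i ≤ n) :
    ∏ j ∈ Icc 1 n, ((j : ℚ) - (i : ℚ) + (n : ℚ)) = ((∏ j ∈ Icc 1 n, (n + j - i) : ℕ) : ℚ) := by
  rw [Nat.cast_prod]
  apply Finset.prod_congr rfl
  intro j hj
  rw [Finset.mem_Icc] at hj
  rw [Nat.cast_sub (by omega), Nat.cast_add]
  ring

lemma asm_rowNum (n i : ℕ) (h1 : 1 ≤ i) (h2 : i ≤ n) :
    ∏ j ∈ Icc 1 n, (3 * ((j : ℚ) - (i : ℚ)) + 1) =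
      (-1) ^ (i - 1) * ((∏ t ∈ range (i - 1), (3 * t + 2) : ℕ) : ℚ)
        * ((∏ t ∈ range (n - i + 1), (3 * t + 1) : ℕ) : ℚ) := by
  rw [← Finset.Ico_add_one_right_eq_Icc,
    ← Finset.prod_Ico_consecutive (fun j => 3 * ((j : ℚ) - (i : ℚ)) + 1) h1 (by omega : i ≤ n + 1)]
  have hB : ∏ j ∈ Ico i (n + 1), (3 * ((j : ℚ) - (i : ℚ)) + 1)
      = ((∏ t ∈ range (n - i + 1), (3 * t + 1) : ℕ) : ℚ) := by
    rw [Finset.prod_Ico_eq_prod_range, Nat.cast_prod]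
    have hr : n + 1 - i = n - i + 1 := by omega
    rw [hr]
    apply Finset.prod_congr rfl
    intro t _
    push_cast
    ring
  have hA : ∏ j ∈ Ico 1 i, (3 * ((j : ℚ) - (i : ℚ)) + 1)
      = (-1) ^ (i - 1) * ((∏ t ∈ range (i - 1), (3 * t + 2) : ℕ) : ℚ) := by
    rw [Finset.prod_Ico_eq_prod_range]
    rw [← Finset.prod_range_reflect (fun t => 3 * (((1 + t : ℕ) : ℚ) - (i : ℚ)) + 1) (i - 1)]
    have hterm : ∀ t ∈ range (i - 1),
        (3 * (((1 + (i - 1 - 1 - t) : ℕ) : ℚ) - (i : ℚ)) + 1)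
          = (-1) * ((3 * t + 2 : ℕ) : ℚ) := by
      intro t ht
      rw [Finset.mem_range] at ht
      have h3 : (1 + (i - 1 - 1 - t) : ℕ) = i - (1 + t) := by omega
      rw [h3, Nat.cast_sub (by omega)]
      push_cast
      ring
    rw [Finset.prod_congr rfl hterm, Finset.prod_mul_distrib, Finset.prod_const,
      Nat.cast_prod, Finset.card_range]
  rw [hA, hB, mul_assoc]

lemma asm_Icc_prod {M : Type*} [CommMonoid M] (n : ℕ) (f : ℕ → M) :
    ∏ i ∈ Icc 1 n, f i = ∏ t ∈ range n, f (t + 1) := by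
  rw [← Finset.Ico_add_one_right_eq_Icc, Finset.prod_Ico_eq_prod_range]
  simp [add_comm]

lemma asm_Icc_sum (n : ℕ) : ∑ i ∈ Icc 1 n, (i - 1) = ∑ t ∈ range n, t := by
  rw [← Finset.Ico_add_one_right_eq_Icc, Finset.sum_Ico_eq_sum_range]
  simp

lemma asm_prod_ext {M : Type*} [CommMonoid M] (f : ℕ → M) {a b : ℕ} (h : a = b) :
    ∏ t ∈ range a, f t = ∏ t ∈ range b, f t := by rw [h]

lemma asm_numTotal (n : ℕ) :
    ∏ i ∈ Icc 1 n, ((-1 : ℚ) ^ (i - 1) * ((∏ t ∈ range (i - 1), (3 * t + 2) : ℕ) : ℚ)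
        * ((∏ t ∈ range (n - i + 1), (3 * t + 1) : ℕ) : ℚ))
      = (-1) ^ (∑ t ∈ range n, t) *
        (((∏ k ∈ range n, ∏ t ∈ range k, (3 * t + 2)) *
          (∏ k ∈ range n, ∏ t ∈ range (k + 1), (3 * t + 1)) : ℕ) : ℚ) := by
  have hQ : ∏ i ∈ Icc 1 n, ∏ t ∈ range (i - 1), (3 * (t : ℚ) + 2)
      = ∏ k ∈ range n, ∏ t ∈ range k, (3 * (t : ℚ) + 2) := by
    rw [asm_Icc_prod n (fun i => ∏ t ∈ range (i - 1), (3 * (t : ℚ) + 2))]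
    exact Finset.prod_congr rfl fun t _ => asm_prod_ext _ (by omega)
  have hP : ∏ i ∈ Icc 1 n, ∏ t ∈ range (n - i + 1), (3 * (t : ℚ) + 1)
      = ∏ k ∈ range n, ∏ t ∈ range (k + 1), (3 * (t : ℚ) + 1) := by
    rw [asm_Icc_prod n (fun i => ∏ t ∈ range (n - i + 1), (3 * (t : ℚ) + 1)),
      ← Finset.prod_range_reflect (fun k => ∏ t ∈ range (k + 1), (3 * (t : ℚ) + 1)) n]
    apply Finset.prod_congr rfl
    intro k hk
    rw [Finset.mem_range] at hk
    exact asm_prod_ext _ (by omega)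
  rw [Finset.prod_mul_distrib, Finset.prod_mul_distrib, Finset.prod_pow_eq_pow_sum,
    asm_Icc_sum]
  push_cast
  rw [hQ, hP]
  ring

lemma asm_denTotal (n : ℕ) :
    (∏ i ∈ Icc 1 n, ∏ j ∈ Icc 1 n, (n + j - i)) * (∏ k ∈ range n, k !)
      = ∏ k ∈ range n, (n + k)! := by
  have row : ∀ i ∈ Icc 1 n, (∏ j ∈ Icc 1 n, (n + j - i)) * (n - i)! = (2 * n - i)! := by
    intro i hi
    rw [Finset.mem_Icc] at hi
    have h1 : ∀ j ∈ Icc 1 n, (n + j - i) = (n - i) + j := by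
      intro j hj; rw [Finset.mem_Icc] at hj; omega
    rw [Finset.prod_congr rfl h1, mul_comm, asm_asc]
    congr 1
    omega
  have hprod : ∏ i ∈ Icc 1 n, ((∏ j ∈ Icc 1 n, (n + j - i)) * (n - i)!)
      = ∏ i ∈ Icc 1 n, (2 * n - i)! := Finset.prod_congr rfl row
  rw [Finset.prod_mul_distrib] at hprod
  have h2 : ∏ i ∈ Icc 1 n, (n - i)! = ∏ k ∈ range n, k ! := by
    rw [asm_Icc_prod n (fun i => (n - i)!),
      ← Finset.prod_range_reflect (fun k => k !) n]
    apply Finset.prod_congr rfl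
    intro k hk; rw [Finset.mem_range] at hk
    congr 1; omega
  have h3 : ∏ i ∈ Icc 1 n, (2 * n - i)! = ∏ k ∈ range n, (n + k)! := by
    rw [asm_Icc_prod n (fun i => (2 * n - i)!),
      ← Finset.prod_range_reflect (fun k => (n + k)!) n]
    apply Finset.prod_congr rfl
    intro k hk; rw [Finset.mem_range] at hk
    congr 1; omega
  rw [← h2, hprod, h3]

theorem asm_count_is_positive_integer (n : ℕ) (hn : 1 ≤ n) :
    ∃ m : ℕ, 0 < m ∧
      (-3 : ℚ) ^ (n * (n - 1) / 2) *
        ∏ i ∈ Finset.Icc 1 n, ∏ j ∈ Finset.Icc 1 n,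
          (3 * ((j : ℚ) - (i : ℚ)) + 1) / ((j : ℚ) - (i : ℚ) + (n : ℚ)) = (m : ℚ) := by
  set N := n * (n - 1) / 2 with hN
  set A1 := ∏ k ∈ range n, ∏ t ∈ range k, (3 * t + 2) with hA1
  set A2 := ∏ k ∈ range n, ∏ t ∈ range (k + 1), (3 * t + 1) with hA2
  set B := ∏ i ∈ Icc 1 n, ∏ j ∈ Icc 1 n, (n + j - i) with hB
  set K := ∏ k ∈ range n, k ! with hK
  set Dn := ∏ k ∈ range n, (n + k)! with hDn
  set Nn := ∏ k ∈ range n, (3 * k + 1)! with hNn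
  have hsum : ∑ t ∈ range n, t = N := by
    have := Finset.sum_range_id_mul_two n
    omega
  have hDvd : Dn ∣ Nn := asm_dvd n hn
  refine ⟨Nn / Dn, ?_, ?_⟩
  · have hpos : 0 < Nn := Finset.prod_pos fun k _ => Nat.factorial_pos _
    exact Nat.div_pos (Nat.le_of_dvd hpos hDvd)
      (Finset.prod_pos fun k _ => Nat.factorial_pos _)
  · set m := Nn / Dn with hm
    have hmDn : m * Dn = Nn := Nat.div_mul_cancel hDvd
    have hNneq : Nn = A2 * A1 * (3 ^ N * K) := by
      rw [hNn]
      have : ∀ k ∈ range n, (3 * k + 1)! =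
          (∏ t ∈ range (k + 1), (3 * t + 1)) * (∏ t ∈ range k, (3 * t + 2)) * (3 ^ k * k !) :=
        fun k _ => asm_fact_split k
      rw [Finset.prod_congr rfl this]
      rw [Finset.prod_mul_distrib, Finset.prod_mul_distrib, Finset.prod_mul_distrib,
        Finset.prod_pow_eq_pow_sum, hsum]
    have hDneq : Dn = B * K := (asm_denTotal n).symm
    have hKpos : 0 < K := Finset.prod_pos fun k _ => Nat.factorial_pos _
    have hmB : m * B = 3 ^ N * (A2 * A1) := by
      have h := hmDn
      rw [hDneq, hNneq] at h
      have h2 : (m * B) * K = (3 ^ N * (A2 * A1)) * K := by ring_nf; ring_nf at h; linarith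
      exact Nat.eq_of_mul_eq_mul_right hKpos h2
    have hBpos : 0 < B := by
      apply Finset.prod_pos
      intro i hi
      apply Finset.prod_pos
      intro j hj
      rw [Finset.mem_Icc] at hi hj
      omega
    -- now the rational computation
    have hrow : ∀ i ∈ Icc 1 n,
        (∏ j ∈ Icc 1 n, (3 * ((j : ℚ) - (i : ℚ)) + 1) / ((j : ℚ) - (i : ℚ) + (n : ℚ)))
          = ((-1) ^ (i - 1) * ((∏ t ∈ range (i - 1), (3 * t + 2) : ℕ) : ℚ)
              * ((∏ t ∈ range (n - i + 1), (3 * t + 1) : ℕ) : ℚ))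
            / ((∏ j ∈ Icc 1 n, (n + j - i) : ℕ) : ℚ) := by
      intro i hi
      rw [Finset.mem_Icc] at hi
      rw [Finset.prod_div_distrib, asm_rowNum n i hi.1 hi.2, asm_rowDen n i hi.2]
    rw [Finset.prod_congr rfl hrow, Finset.prod_div_distrib, asm_numTotal, hsum]
    rw [← Nat.cast_prod]
    rw [show ((∏ i ∈ Icc 1 n, ∏ j ∈ Icc 1 n, (n + j - i) : ℕ) : ℚ) = (B : ℚ) from rfl]
    have hBne : (B : ℚ) ≠ 0 := by exact_mod_cast hBpos.ne'
    rw [mul_div_assoc, ← mul_assoc]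
    rw [show ((-3 : ℚ)) ^ N = (-1) ^ N * 3 ^ N by rw [← neg_one_mul]; rw [mul_pow]]
    have hs : ((-1 : ℚ)) ^ N * (-1) ^ N = 1 := by
      rw [← pow_add]
      exact Even.neg_one_pow ⟨N, rfl⟩
    have hq : (3 : ℚ) ^ N * ((A2 : ℚ) * (A1 : ℚ)) = (m : ℚ) * (B : ℚ) := by
      exact_mod_cast congrArg (fun x : ℕ => (x : ℚ)) hmB.symm
    rw [← mul_div_assoc, div_eq_iff hBne,
      show ((∏ k ∈ range n, ∏ t ∈ range k, (3 * t + 2)) *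
          (∏ k ∈ range n, ∏ t ∈ range (k + 1), (3 * t + 1)) : ℕ) = A1 * A2 from rfl,
      Nat.cast_mul]
    linear_combination (3 : ℚ) ^ N * ((A1 : ℚ) * (A2 : ℚ)) * hs + hq
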